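/- If η ∈ ℤ₂ satisfies η ≡ 2 (mod 4) and η is transcendental over ℚ, then the additive group G = ℤ[1/η] ∩ ℤ₂ is a free abelian group of countably infinite rank, i.e., G ≅ ℤ^{(ω)}. -/

import Mathlib

open Polynomial

open Polynomial

lemma aevalInt_injective (x : ℚ_[2]) (hx : Transcendental ℚ x) :
    Function.Injective (fun p : Polynomial ℤ => Polynomial.aeval x p) := by
  intro p q h
  have hinj := transcendental_iff_injective.mp hx
  have h2 : (Polynomial.aeval x) (p.map (algebraMap ℤ ℚ)) =
      (Polynomial.aeval x) (q.map (algebraMap ℤ ℚ)) := by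
    rwa [aeval_map_algebraMap, aeval_map_algebraMap]
  have := hinj h2
  exact Polynomial.map_injective (algebraMap ℤ ℚ) (fun a b hab => by exact_mod_cast hab) this

lemma freeKey (N : Submodule ℤ (Polynomial ℤ))
    (hr : Cardinal.aleph0 ≤ Module.rank ℤ ↥N) :
    Nonempty (↥N ≃ₗ[ℤ] (ℕ →₀ ℤ)) := by
  classical
  let J : ℕ → Submodule ℤ ℤ := fun n =>
    Submodule.map (lcoeff ℤ n) (N ⊓ degreeLT ℤ (n+1))
  have hgen : ∀ n : ℕ, ∃ b : Polynomial ℤ,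
      (b ∈ N ∧ b.degree < ((n+1 : ℕ) : WithBot ℕ)) ∧
      b.coeff n = Submodule.IsPrincipal.generator (J n) := by
    intro n
    obtain ⟨b, hb, hb2⟩ := Submodule.IsPrincipal.generator_mem (J n)
    exact ⟨b, ⟨hb.1, mem_degreeLT.mp hb.2⟩, hb2⟩
  choose b hb hbc using hgen
  have hbN : ∀ n, b n ∈ N := fun n => (hb n).1
  have hbdeg : ∀ n, (b n).degree < ((n+1 : ℕ) : WithBot ℕ) := fun n => (hb n).2
  set c : ℕ → ℤ := fun n => Submodule.IsPrincipal.generator (J n) with hc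
  set S : Set ℕ := {n | c n ≠ 0} with hS
  set v : S → ↥N := fun s => ⟨b s, hbN s⟩ with hv
  -- linear independence of b over S
  have hbli : LinearIndependent ℤ (fun s : S => b ↑s) := by
    rw [linearIndependent_iff']
    intro s g
    induction s using Finset.strongInduction with
    | _ s ih =>
      intro hsum i hi
      rcases s.eq_empty_or_nonempty with rfl | hne
      · exact absurd hi (Finset.notMem_empty i)
      set m := s.max' hne with hm
      have h0 : ∑ j ∈ s, g j * (b ↑j).coeff ↑m = 0 := by
        have := congrArg (fun q => Polynomial.coeff q (↑m : ℕ)) hsum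
        simpa [Polynomial.finset_sum_coeff, Polynomial.coeff_smul, smul_eq_mul] using this
      have hterm : ∀ j ∈ s, j ≠ m → g j * (b ↑j).coeff ↑m = 0 := by
        intro j hjs hjm
        have hlt : (↑j : ℕ) < ↑m :=
          lt_of_le_of_ne (Subtype.coe_le_coe.mpr (s.le_max' j hjs))
            (fun hh => hjm (Subtype.ext hh))
        have : (b ↑j).coeff ↑m = 0 := by
          apply Polynomial.coeff_eq_zero_of_degree_lt
          exact lt_of_lt_of_le (hbdeg ↑j) (by exact_mod_cast hlt)
        rw [this, mul_zero]
      have hm0 : g m * c ↑m = 0 := by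
        have := (Finset.sum_eq_single_of_mem m (s.max'_mem hne) hterm).symm.trans h0
        rwa [hbc ↑m] at this
      have hgm : g m = 0 := by
        rcases mul_eq_zero.mp hm0 with h | h
        · exact h
        · exact absurd h m.2
      by_cases him : i = m
      · rw [him]; exact hgm
      · refine ih (s.erase m) (Finset.erase_ssubset (s.max'_mem hne)) ?_ i
          (Finset.mem_erase.mpr ⟨him, hi⟩)
        rw [Finset.sum_erase_eq_sub (s.max'_mem hne), hsum, hgm, zero_smul, sub_zero]
  -- spanning
  have hspan : ∀ n : ℕ, ∀ f ∈ N, f.degree < ((n : ℕ) : WithBot ℕ) →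
      f ∈ Submodule.span ℤ (Set.range fun s : S => b ↑s) := by
    intro n
    induction n with
    | zero =>
      intro f _ hf
      have : f = 0 := by
        rw [← Polynomial.degree_eq_bot]
        exact Nat.WithBot.lt_zero_iff.mp (by exact_mod_cast hf)
      rw [this]; exact Submodule.zero_mem _
    | succ n ih =>
      intro f hfN hfdeg
      have hJ : f.coeff n ∈ J n :=
        ⟨f, ⟨hfN, mem_degreeLT.mpr hfdeg⟩, rfl⟩
      obtain ⟨t, ht0⟩ := (Submodule.IsPrincipal.mem_iff_eq_smul_generator (J n)).mp hJ
      have ht : f.coeff n = t • c n := ht0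
      have hbc' : (b n).coeff n = c n := hbc n
      by_cases hcn : c n = 0
      · have hf0 : f.coeff n = 0 := by rw [ht, hcn, smul_zero]
        have : f.degree < ((n : ℕ) : WithBot ℕ) := by
          rw [Polynomial.degree_lt_iff_coeff_zero]
          intro m hm
          rcases eq_or_lt_of_le hm with rfl | hlt
          · exact hf0
          · exact (Polynomial.degree_lt_iff_coeff_zero f (n+1)).mp hfdeg m
              (by exact_mod_cast hlt)
        exact ih f hfN this
      · set g := f - t • b n with hg
        have hgN : g ∈ N := N.sub_mem hfN (N.smul_mem t (hbN n))
        have hgc : g.coeff n = 0 := by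
          simp [hg, Polynomial.coeff_sub, Polynomial.coeff_smul, hbc', ht]
        have hgdeg : g.degree < ((n+1 : ℕ) : WithBot ℕ) := by
          rw [hg]
          apply lt_of_le_of_lt (Polynomial.degree_sub_le _ _)
          exact max_lt hfdeg (lt_of_le_of_lt (Polynomial.degree_smul_le t (b n)) (hbdeg n))
        have hgdeg' : g.degree < ((n : ℕ) : WithBot ℕ) := by
          rw [Polynomial.degree_lt_iff_coeff_zero]
          intro m hm
          rcases eq_or_lt_of_le hm with rfl | hlt
          · exact hgc
          · exact (Polynomial.degree_lt_iff_coeff_zero g (n+1)).mp hgdeg m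
              (by exact_mod_cast hlt)
        have hbmem : b n ∈ Submodule.span ℤ (Set.range fun s : S => b ↑s) :=
          Submodule.subset_span ⟨⟨n, hcn⟩, rfl⟩
        have := Submodule.add_mem _ (ih g hgN hgdeg') (Submodule.smul_mem _ t hbmem)
        simpa [hg] using this
  -- basis
  have hvli : LinearIndependent ℤ v := by
    apply LinearIndependent.of_comp N.subtype
    exact hbli
  have hvspan : ⊤ ≤ Submodule.span ℤ (Set.range v) := by
    intro z _
    have hz : (z : Polynomial ℤ) ∈ Submodule.span ℤ (Set.range fun s : S => b ↑s) := by
      apply hspan ((z : Polynomial ℤ).natDegree + 1) _ z.2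
      exact lt_of_le_of_lt Polynomial.degree_le_natDegree (by exact_mod_cast Nat.lt_succ_self _)
    have hrange : (Set.range fun s : S => b ↑s) = N.subtype '' (Set.range v) := by
      ext y
      constructor
      · rintro ⟨s, rfl⟩; exact ⟨v s, ⟨s, rfl⟩, rfl⟩
      · rintro ⟨w, ⟨s, rfl⟩, rfl⟩; exact ⟨s, rfl⟩
    rw [hrange, ← Submodule.map_span] at hz
    obtain ⟨y, hy, hyz⟩ := hz
    have : y = z := Subtype.ext hyz
    exact this ▸ hy
  let basis : Module.Basis S ℤ ↥N := Module.Basis.mk hvli hvspan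
  have hcard : Cardinal.mk S = Cardinal.aleph0 := by
    refine le_antisymm Cardinal.mk_le_aleph0 ?_
    rw [basis.mk_eq_rank'']
    exact hr
  obtain ⟨e⟩ := Cardinal.eq.mp (hcard.trans Cardinal.mk_nat.symm)
  exact ⟨basis.repr.trans (Finsupp.domLCongr e)⟩


/-- The additive subgroup `G = ℤ[1/η] ∩ ℤ₂` of `ℤ₂`. -/
noncomputable def zEtaInt (η : ℤ_[2]) : AddSubgroup ℤ_[2] where
  carrier := {a | ∃ p : Polynomial ℤ, (a : ℚ_[2]) = Polynomial.aeval ((η : ℚ_[2]))⁻¹ p}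
  zero_mem' := ⟨0, by simp⟩
  add_mem' := by
    rintro a b ⟨p, hp⟩ ⟨q, hq⟩
    exact ⟨p + q, by push_cast [hp, hq]; simp⟩
  neg_mem' := by
    rintro a ⟨p, hp⟩
    exact ⟨-p, by push_cast [hp]; simp⟩

/-- if `η ≡ 2 (mod 4)` is transcendental over `ℚ`, then
`G = ℤ[1/η] ∩ ℤ₂` is free abelian of countably infinite rank, i.e. `G ≅ ℤ^{(ω)}`. -/
theorem zEtaInt_free_of_transcendental (η : ℤ_[2]) (hη : (4 : ℤ_[2]) ∣ (η - 2))
    (htr : Transcendental ℚ (η : ℚ_[2])) :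
    Nonempty (↥(zEtaInt η) ≃+ (ℕ →₀ ℤ)) := by
  classical
  obtain ⟨k, hk⟩ := hη
  have hfac : η = 2 * (1 + 2 * k) := by linear_combination hk
  have hu : IsUnit (1 + 2 * k : ℤ_[2]) := by
    rw [PadicInt.isUnit_iff]
    have h2 : ‖(2 : ℤ_[2])‖ = 2⁻¹ := by
      have := @PadicInt.norm_p 2 _
      simpa using this
    have hlt : ‖(2 * k : ℤ_[2])‖ < 1 := by
      calc ‖(2 * k : ℤ_[2])‖ = ‖(2:ℤ_[2])‖ * ‖k‖ := by rw [norm_mul]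
        _ ≤ 2⁻¹ * 1 := by
            rw [h2]; exact mul_le_mul_of_nonneg_left (PadicInt.norm_le_one k) (by norm_num)
        _ < 1 := by norm_num
    have hone : ‖((1 : ℚ_[2]) + ((2*k : ℤ_[2]) : ℚ_[2]))‖ = 1 := by
      rw [Padic.add_eq_max_of_ne]
      · simp only [norm_one]
        rw [max_eq_left]
        exact le_of_lt (by rw [← PadicInt.norm_def]; exact lt_of_lt_of_le hlt le_rfl)
      · rw [norm_one, ← PadicInt.norm_def]
        exact fun h => absurd h.symm (ne_of_lt hlt)
    calc ‖(1 + 2*k : ℤ_[2])‖ = ‖((1 + 2*k : ℤ_[2]) : ℚ_[2])‖ := PadicInt.norm_def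
      _ = ‖((1:ℚ_[2]) + ((2*k : ℤ_[2]):ℚ_[2]))‖ := by push_cast; ring_nf
      _ = 1 := hone
  set x : ℚ_[2] := ((η : ℚ_[2]))⁻¹ with hxdef
  set w : ℤ_[2] := ((hu.unit⁻¹ : ℤ_[2]ˣ) : ℤ_[2]) with hwdef
  have hcw : ((1 + 2*k : ℤ_[2]) : ℚ_[2]) * (w : ℚ_[2]) = 1 := by
    rw [← PadicInt.coe_mul]
    have h1 : (1 + 2*k : ℤ_[2]) * w = 1 := hu.mul_val_inv
    rw [h1, PadicInt.coe_one]
  have hη2 : (η : ℚ_[2]) = 2 * ((1 + 2*k : ℤ_[2]) : ℚ_[2]) := by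
    have h22 : ((2:ℤ_[2]) : ℚ_[2]) = 2 := by exact_mod_cast rfl
    rw [hfac, PadicInt.coe_mul, h22]
  have hx : Transcendental ℚ x := fun h => htr (IsAlgebraic.inv_iff.mp h)
  have hw2x : (w : ℚ_[2]) = 2 * x := by
    have hwinv : (w : ℚ_[2]) = (((1 + 2*k : ℤ_[2]) : ℚ_[2]))⁻¹ :=
      eq_inv_of_mul_eq_one_right hcw
    rw [hxdef, hη2, mul_inv, hwinv]
    rw [← mul_assoc, mul_inv_cancel₀ (two_ne_zero), one_mul]
  have h2x : Transcendental ℚ ((2:ℚ_[2]) * x) := by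
    have := hx.aeval (C (2:ℚ) * X) (by simp [natDegree_C_mul_X (2:ℚ) two_ne_zero])
      (by rw [leadingCoeff_C_mul_X]; exact mem_nonZeroDivisors_of_ne_zero two_ne_zero)
    simpa using this
  have hmono : ∀ p : Polynomial ℤ,
      aeval x (aeval (C (2:ℤ) * X) p) = aeval ((2:ℚ_[2]) * x) p := by
    intro p
    rw [← comp_eq_aeval, aeval_comp]
    congr 1
    simp [map_ofNat]
  have hint : ∀ p : Polynomial ℤ,
      aeval ((w : ℚ_[2])) p = ((aeval w p : ℤ_[2]) : ℚ_[2]) := by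
    intro p
    exact Polynomial.aeval_algHom_apply (PadicInt.Coe.ringHom.toIntAlgHom) w p
  -- the submodule of polynomials with integral value at x
  let P : Submodule ℤ (Polynomial ℤ) :=
    { carrier := {p | ‖(aeval x p : ℚ_[2])‖ ≤ 1}
      add_mem' := by
        intro p q hp hq
        simp only [Set.mem_setOf_eq, map_add] at *
        exact le_trans (Padic.nonarchimedean _ _) (max_le hp hq)
      zero_mem' := by simp
      smul_mem' := by
        intro n p hp
        simp only [Set.mem_setOf_eq] at *
        rw [zsmul_eq_mul, map_mul, map_intCast]
        calc ‖((n:ℚ_[2])) * (aeval x p : ℚ_[2])‖ = ‖((n:ℚ_[2]))‖ * ‖(aeval x p : ℚ_[2])‖ :=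
              norm_mul _ _
          _ ≤ 1 * 1 := mul_le_mul (Padic.norm_int_le_one n) hp (norm_nonneg _) zero_le_one
          _ = 1 := one_mul 1 }
  have hmemP : ∀ p : Polynomial ℤ, aeval (C (2:ℤ) * X) p ∈ P := by
    intro p
    show ‖(aeval x (aeval (C (2:ℤ) * X) p) : ℚ_[2])‖ ≤ 1
    rw [hmono, ← hw2x, hint, ← PadicInt.norm_def]
    exact PadicInt.norm_le_one _
  let Θ : Polynomial ℤ →ₗ[ℤ] ↥P :=
    LinearMap.codRestrict P (Polynomial.aeval (C (2:ℤ) * X)).toLinearMap hmemP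
  have hΘinj : Function.Injective Θ := by
    intro p q h
    have h1 : aeval (C (2:ℤ) * X) p = aeval (C (2:ℤ) * X) q := congrArg Subtype.val h
    apply aevalInt_injective _ h2x
    show aeval ((2:ℚ_[2]) * x) p = aeval ((2:ℚ_[2]) * x) q
    rw [← hmono, ← hmono, h1]
  have hrkP : Cardinal.aleph0 ≤ Module.rank ℤ ↥P := by
    calc Cardinal.aleph0 = Cardinal.mk ℕ := Cardinal.mk_nat.symm
      _ = Module.rank ℤ (Polynomial ℤ) := (Polynomial.basisMonomials ℤ).mk_eq_rank''
      _ ≤ Module.rank ℤ ↥P := LinearMap.rank_le_of_injective Θ hΘinj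
  -- the evaluation equivalence P ≃ G
  have hmemG : ∀ q : ↥P, (⟨(aeval x (q : Polynomial ℤ) : ℚ_[2]), q.2⟩ : ℤ_[2]) ∈ zEtaInt η :=
    fun q => ⟨(q : Polynomial ℤ), rfl⟩
  let Ψ : ↥P →ₗ[ℤ] ↥(zEtaInt η) :=
    { toFun := fun q => ⟨⟨(aeval x (q : Polynomial ℤ) : ℚ_[2]), q.2⟩, hmemG q⟩
      map_add' := by
        intro a b
        apply Subtype.ext
        apply Subtype.ext
        show (aeval x ((a : Polynomial ℤ) + (b : Polynomial ℤ)) : ℚ_[2]) = _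
        rw [map_add]
        rfl
      map_smul' := by
        intro n a
        apply Subtype.ext
        apply Subtype.ext
        show (aeval x ((n • (a : Polynomial ℤ))) : ℚ_[2]) = _
        rw [map_smul]
        rfl }
  have hΨbij : Function.Bijective Ψ := by
    constructor
    · intro a b h
      apply Subtype.ext
      apply aevalInt_injective x hx
      have := congrArg (fun z : ↥(zEtaInt η) => ((z : ℤ_[2]) : ℚ_[2])) h
      exact this
    · rintro ⟨g, hg⟩
      obtain ⟨p, hp⟩ := hg
      have hpP : p ∈ P := by
        show ‖(aeval x p : ℚ_[2])‖ ≤ 1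
        rw [← hp, ← PadicInt.norm_def]
        exact PadicInt.norm_le_one _
      refine ⟨⟨p, hpP⟩, ?_⟩
      apply Subtype.ext
      apply Subtype.ext
      exact hp.symm
  obtain ⟨e⟩ := freeKey P hrkP
  exact ⟨(((LinearEquiv.ofBijective Ψ hΨbij).symm.trans e)).toAddEquiv⟩
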